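/- Let G be a finite group, let g, h ∈ G, and let k be a positive integer. Let u = b_k(g,h̃) = h^k + (1-h)·g·h̃ be a Bovdi unit and w = b(g,h̃) = 1 + (1-h)·g·h̃ the corresponding bicyclic unit in ℤG. Then the subgroup ⟨u, w^{-1}·u·w⟩ of the unit group U(ℤG) is abelian-by-finite (it has an abelian normal subgroup of finite index) and solvable of derived length at most 2. -/

import Mathlib

/-- `h̃ = ∑_{x ∈ ⟨h⟩} x` in the group ring `R G`, written as `∑_{i < o(h)} h^i`. -/
noncomputable def grpTilde (R : Type*) [CommRing R] {G : Type*} [Group G] (h : G) :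
    MonoidAlgebra R G :=
  ∑ i ∈ Finset.range (orderOf h), MonoidAlgebra.of R G (h ^ i)

/-- Bovdi unit `b_k(g, h̃) = h^k + (1 - h)·g·h̃`. -/
noncomputable def bovdiL (R : Type*) [CommRing R] {G : Type*} [Group G] (g h : G) (k : ℕ) :
    MonoidAlgebra R G :=
  MonoidAlgebra.of R G (h ^ k) +
    (1 - MonoidAlgebra.of R G h) * MonoidAlgebra.of R G g * grpTilde R h

/-- Bovdi unit `b_k(h̃, g) = h^k + h̃·g·(1 - h)`. -/
noncomputable def bovdiR (R : Type*) [CommRing R] {G : Type*} [Group G] (g h : G) (k : ℕ) :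
    MonoidAlgebra R G :=
  MonoidAlgebra.of R G (h ^ k) +
    grpTilde R h * MonoidAlgebra.of R G g * (1 - MonoidAlgebra.of R G h)

namespace Stmt8Aux

set_option linter.unusedSectionVars false

open MonoidAlgebra Subgroup

variable {G : Type*} [Group G] [Fintype G]

local notation "A" => MonoidAlgebra ℤ G
local notation "oof" => MonoidAlgebra.of ℤ G

omit [Fintype G] in
lemma nsmul_cancel (n : ℕ) (hn : n ≠ 0) (x y : A) (hxy : n • x = n • y) : x = y := by
  have : ∀ a : G, x.coeff a = y.coeff a := by
    intro a
    have h2 := DFunLike.congr_fun (F := G →₀ ℤ) (congrArg MonoidAlgebra.coeff hxy) a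
    simp only [MonoidAlgebra.coeff_smul, Finsupp.smul_apply, smul_eq_mul] at h2
    exact mul_left_cancel₀ (by exact_mod_cast hn : (n:ℤ) ≠ 0) (by exact_mod_cast h2)
  exact MonoidAlgebra.ext (Finsupp.ext this)

section tilde

variable (h : G)

lemma tilde_mul_self : grpTilde ℤ h * oof h = grpTilde ℤ h := by
  have key : grpTilde ℤ h * oof h - grpTilde ℤ h = 0 := by
    rw [grpTilde, Finset.sum_mul, ← Finset.sum_sub_distrib]
    have : ∀ i ∈ Finset.range (orderOf h),
        oof (h ^ i) * oof h - oof (h ^ i) = oof (h ^ (i+1)) - oof (h ^ i) := by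
      intro i _; rw [← map_mul, ← pow_succ]
    rw [Finset.sum_congr rfl this, Finset.sum_range_sub (fun i => oof (h ^ i)),
      pow_orderOf_eq_one, pow_zero]
    simp
  exact sub_eq_zero.mp key

lemma self_mul_tilde : oof h * grpTilde ℤ h = grpTilde ℤ h := by
  have key : oof h * grpTilde ℤ h - grpTilde ℤ h = 0 := by
    rw [grpTilde, Finset.mul_sum, ← Finset.sum_sub_distrib]
    have : ∀ i ∈ Finset.range (orderOf h),
        oof h * oof (h ^ i) - oof (h ^ i) = oof (h ^ (i+1)) - oof (h ^ i) := by
      intro i _; rw [← map_mul, ← pow_succ']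
    rw [Finset.sum_congr rfl this, Finset.sum_range_sub (fun i => oof (h ^ i)),
      pow_orderOf_eq_one, pow_zero]
    simp
  exact sub_eq_zero.mp key

lemma tilde_mul_inv : grpTilde ℤ h * oof h⁻¹ = grpTilde ℤ h := by
  conv_lhs => rw [← tilde_mul_self h]
  rw [mul_assoc, ← map_mul, mul_inv_cancel, map_one, mul_one]

lemma inv_mul_tilde : oof h⁻¹ * grpTilde ℤ h = grpTilde ℤ h := by
  conv_lhs => rw [← self_mul_tilde h]
  rw [← mul_assoc, ← map_mul, inv_mul_cancel, map_one, one_mul]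

lemma tilde_mul_zpow (n : ℤ) : grpTilde ℤ h * oof (h ^ n) = grpTilde ℤ h := by
  induction n using Int.induction_on with
  | zero => rw [zpow_zero, map_one, mul_one]
  | succ i ih => rw [zpow_add_one, map_mul, ← mul_assoc, ih, tilde_mul_self]
  | pred i ih => rw [zpow_sub_one, map_mul, ← mul_assoc, ih, tilde_mul_inv]

lemma zpow_mul_tilde (n : ℤ) : oof (h ^ n) * grpTilde ℤ h = grpTilde ℤ h := by
  induction n using Int.induction_on with
  | zero => rw [zpow_zero, map_one, one_mul]
  | succ i ih => rw [zpow_add_one, map_mul, mul_assoc, self_mul_tilde, ih]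
  | pred i ih => rw [zpow_sub_one, map_mul, mul_assoc, inv_mul_tilde, ih]

lemma tilde_mul_mem {z : G} (hz : z ∈ Subgroup.zpowers h) :
    grpTilde ℤ h * oof z = grpTilde ℤ h := by
  obtain ⟨n, rfl⟩ := Subgroup.mem_zpowers_iff.mp hz
  exact tilde_mul_zpow h n

lemma mem_mul_tilde {z : G} (hz : z ∈ Subgroup.zpowers h) :
    oof z * grpTilde ℤ h = grpTilde ℤ h := by
  obtain ⟨n, rfl⟩ := Subgroup.mem_zpowers_iff.mp hz
  exact zpow_mul_tilde h n

lemma tilde_mul_sub : grpTilde ℤ h * (1 - oof h) = 0 := by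
  rw [mul_sub, mul_one, tilde_mul_self, sub_self]

lemma sub_mul_tilde : (1 - oof h) * grpTilde ℤ h = 0 := by
  rw [sub_mul, one_mul, self_mul_tilde, sub_self]

lemma tilde_mul_tilde : grpTilde ℤ h * grpTilde ℤ h = (orderOf h) • grpTilde ℤ h := by
  nth_rewrite 1 [grpTilde]
  rw [Finset.sum_mul]
  have : ∀ i ∈ Finset.range (orderOf h),
      oof (h ^ i) * grpTilde ℤ h = grpTilde ℤ h := by
    intro i _
    exact mem_mul_tilde h (Subgroup.pow_mem _ (Subgroup.mem_zpowers h) i)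
  rw [Finset.sum_congr rfl this, Finset.sum_const, Finset.card_range]

/-- The canonical form for elements of our subgroup. -/
def sform (x : A) : Prop :=
  ∃ z ∈ Subgroup.zpowers h, ∃ γ : A, x = oof z + (1 - oof h) * γ * grpTilde ℤ h

lemma sform_one : sform h 1 :=
  ⟨1, one_mem _, 0, by rw [map_one, mul_zero, zero_mul, add_zero]⟩

lemma commute_of_mem {z : G} (hz : z ∈ Subgroup.zpowers h) :
    oof z * (1 - oof h) = (1 - oof h) * oof z := by
  obtain ⟨n, rfl⟩ := Subgroup.mem_zpowers_iff.mp hz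
  have hc : oof (h ^ n) * oof h = oof h * oof (h ^ n) := by
    rw [← map_mul, ← map_mul, ((Commute.refl h).zpow_left n).eq]
  rw [mul_sub, sub_mul, mul_one, one_mul, hc]

lemma mul_form {z z' : G} (hz : z ∈ Subgroup.zpowers h) (hz' : z' ∈ Subgroup.zpowers h)
    (γ γ' : A) :
    (oof z + (1 - oof h) * γ * grpTilde ℤ h) * (oof z' + (1 - oof h) * γ' * grpTilde ℤ h) =
      oof (z * z') + (1 - oof h) * (oof z * γ' + γ) * grpTilde ℤ h := by
  have hT : ∀ x : A, grpTilde ℤ h * ((1 - oof h) * x) = 0 := by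
    intro x; rw [← mul_assoc, tilde_mul_sub, zero_mul]
  have hswap : ∀ x : A, oof z * ((1 - oof h) * x) = (1 - oof h) * (oof z * x) := by
    intro x; rw [← mul_assoc, commute_of_mem h hz, mul_assoc]
  simp only [mul_add, add_mul, mul_assoc, hT, mul_zero, add_zero, hswap,
    tilde_mul_mem h hz', ← map_mul]
  abel

lemma rep_unique {z z' : G} (hz : z ∈ Subgroup.zpowers h) (hz' : z' ∈ Subgroup.zpowers h)
    (γ γ' : A)
    (heq : oof z + (1 - oof h) * γ * grpTilde ℤ h
      = oof z' + (1 - oof h) * γ' * grpTilde ℤ h) : z = z' := by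
  have ho : orderOf h ≠ 0 := (orderOf_pos h).ne'
  have htail : (1 - oof h) * γ * grpTilde ℤ h = (1 - oof h) * γ' * grpTilde ℤ h := by
    have h2 := congrArg (· * grpTilde ℤ h) heq
    rw [add_mul, add_mul, mul_assoc ((1 - oof h) * γ), mul_assoc ((1 - oof h) * γ'),
      tilde_mul_tilde, mem_mul_tilde h hz, mem_mul_tilde h hz',
      mul_smul_comm, mul_smul_comm] at h2
    exact nsmul_cancel (orderOf h) ho _ _ (add_left_cancel h2)
  have : oof z = oof z' := by
    have := heq
    rw [htail] at this
    exact add_right_cancel this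
  exact MonoidAlgebra.of_injective this

/-- The subgroup of units whose value has the canonical form. -/
def S : Subgroup (MonoidAlgebra ℤ G)ˣ where
  carrier := { t | sform h (↑t : A) }
  one_mem' := by simpa using sform_one h
  mul_mem' := by
    rintro a b ⟨z, hz, γ, ha⟩ ⟨z', hz', γ', hb⟩
    exact ⟨z * z', mul_mem hz hz', oof z * γ' + γ, by
      rw [Units.val_mul, ha, hb, mul_form h hz hz']⟩
  inv_mem' := by
    rintro t ⟨z, hz, γ, ht⟩
    refine ⟨z⁻¹, inv_mem hz, -(oof z⁻¹ * γ), ?_⟩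
    have h1 : (↑t : A) * (oof z⁻¹ + (1 - oof h) * (-(oof z⁻¹ * γ)) * grpTilde ℤ h) = 1 := by
      rw [ht, mul_form h hz (inv_mem hz)]
      have : oof z * -(oof z⁻¹ * γ) + γ = 0 := by
        rw [mul_neg, ← mul_assoc, ← map_mul, mul_inv_cancel, map_one, one_mul,
          neg_add_cancel]
      rw [this, mul_zero, zero_mul, add_zero, mul_inv_cancel, map_one]
    calc (↑t⁻¹ : A) = ↑t⁻¹ * ((↑t : A) * (oof z⁻¹ + (1 - oof h) * (-(oof z⁻¹ * γ)) * grpTilde ℤ h)) := by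
            rw [h1, mul_one]
      _ = (oof z⁻¹ + (1 - oof h) * (-(oof z⁻¹ * γ)) * grpTilde ℤ h) := by
            rw [← mul_assoc, Units.inv_mul, one_mul]

open Classical in
/-- The "h-power part" of an element in canonical form. -/
noncomputable def expo (x : A) : G :=
  if hx : sform h x then hx.choose else 1

lemma expo_eq {z : G} (hz : z ∈ Subgroup.zpowers h) (γ : A)
    {x : A} (hx : x = oof z + (1 - oof h) * γ * grpTilde ℤ h) : expo h x = z := by
  have hs : sform h x := ⟨z, hz, γ, hx⟩
  obtain ⟨hz', γ', hx'⟩ := hs.choose_spec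
  rw [expo]
  rw [dif_pos hs]
  exact rep_unique h hz' hz γ' γ (by rw [← hx', ← hx])

lemma expo_mem {x : A} (hx : sform h x) : expo h x ∈ Subgroup.zpowers h := by
  obtain ⟨z, hz, γ, hx'⟩ := hx
  rw [expo_eq h hz γ hx']; exact hz

end tilde

end Stmt8Aux

/-- Proposition 3.2 (first part): for the Bovdi unit `u = b_k(g,h̃)` and the bicyclic unit
`w = b(g,h̃) = 1 + (1-h)·g·h̃`, the subgroup `⟨u, u^w⟩` of `U(ℤG)` is abelian-by-finite
and solvable of derived length at most `2`. -/
theorem stmt_8 {G : Type*} [Group G] [Fintype G] (g h : G) (k : ℕ) (hk : 0 < k)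
    (u w : (MonoidAlgebra ℤ G)ˣ)
    (hu : (↑u : MonoidAlgebra ℤ G) = bovdiL ℤ g h k)
    (hw : (↑w : MonoidAlgebra ℤ G) =
      1 + (1 - MonoidAlgebra.of ℤ G h) * MonoidAlgebra.of ℤ G g * grpTilde ℤ h) :
    (∃ N : Subgroup ↥(Subgroup.closure {u, w⁻¹ * u * w} : Subgroup (MonoidAlgebra ℤ G)ˣ),
        N.Normal ∧ IsMulCommutative ↥N ∧ N.FiniteIndex) ∧
      derivedSeries ↥(Subgroup.closure {u, w⁻¹ * u * w} : Subgroup (MonoidAlgebra ℤ G)ˣ) 2 =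
        ⊥ := by
  classical
  set Γ : Subgroup (MonoidAlgebra ℤ G)ˣ := Subgroup.closure {u, w⁻¹ * u * w} with hΓdef
  have huS : u ∈ Stmt8Aux.S h :=
    ⟨h ^ k, Subgroup.pow_mem _ (Subgroup.mem_zpowers h) k, MonoidAlgebra.of ℤ G g, by
      rw [hu]; rfl⟩
  have hwS : w ∈ Stmt8Aux.S h :=
    ⟨1, one_mem _, MonoidAlgebra.of ℤ G g, by rw [hw, map_one]⟩
  have hΓS : Γ ≤ Stmt8Aux.S h := by
    rw [hΓdef, Subgroup.closure_le]
    rintro x hx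
    simp only [Set.mem_insert_iff, Set.mem_singleton_iff] at hx
    rcases hx with rfl | rfl
    · exact huS
    · exact mul_mem (mul_mem (inv_mem hwS) huS) hwS
  have hone : ((((1 : ↥Γ) : (MonoidAlgebra ℤ G)ˣ)) : MonoidAlgebra ℤ G)
      = MonoidAlgebra.of ℤ G 1 + (1 - MonoidAlgebra.of ℤ G h) * 0 * grpTilde ℤ h := by
    rw [map_one, mul_zero, zero_mul, add_zero, OneMemClass.coe_one, Units.val_one]
  let φ : ↥Γ →* G :=
    { toFun := fun t => Stmt8Aux.expo h ((t : (MonoidAlgebra ℤ G)ˣ) : MonoidAlgebra ℤ G)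
      map_one' := Stmt8Aux.expo_eq h (one_mem _) 0 hone
      map_mul' := by
        intro a b
        obtain ⟨z, hz, γ, ha⟩ := hΓS a.2
        obtain ⟨z', hz', γ', hb⟩ := hΓS b.2
        have hab : ((((a * b : ↥Γ) : (MonoidAlgebra ℤ G)ˣ)) : MonoidAlgebra ℤ G)
            = MonoidAlgebra.of ℤ G (z * z') + (1 - MonoidAlgebra.of ℤ G h) *
              (MonoidAlgebra.of ℤ G z * γ' + γ) * grpTilde ℤ h := by
          rw [MulMemClass.coe_mul, Units.val_mul, ha, hb, Stmt8Aux.mul_form h hz hz']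
        rw [Stmt8Aux.expo_eq h (mul_mem hz hz') _ hab, Stmt8Aux.expo_eq h hz _ ha,
          Stmt8Aux.expo_eq h hz' _ hb] }
  have hφmem : ∀ t : ↥Γ, φ t ∈ Subgroup.zpowers h := by
    intro t
    exact Stmt8Aux.expo_mem h (hΓS t.2)
  have hker_form : ∀ t : ↥Γ, t ∈ φ.ker → ∃ γ : MonoidAlgebra ℤ G,
      (((t : (MonoidAlgebra ℤ G)ˣ)) : MonoidAlgebra ℤ G)
        = 1 + (1 - MonoidAlgebra.of ℤ G h) * γ * grpTilde ℤ h := by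
    intro t ht
    obtain ⟨z, hz, γ, hform⟩ := hΓS t.2
    have hz1 : z = 1 := by
      have he : φ t = z := Stmt8Aux.expo_eq h hz γ hform
      rw [MonoidHom.mem_ker] at ht
      rw [← he, ht]
    refine ⟨γ, ?_⟩
    rw [hform, hz1, map_one]
  have hker_comm : ∀ p q : ↥Γ, p ∈ φ.ker → q ∈ φ.ker → p * q = q * p := by
    intro p q hp hq
    obtain ⟨γ, hpv⟩ := hker_form p hp
    obtain ⟨γ', hqv⟩ := hker_form q hq
    have hvals : (((p : (MonoidAlgebra ℤ G)ˣ)) : MonoidAlgebra ℤ G) *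
        (((q : (MonoidAlgebra ℤ G)ˣ)) : MonoidAlgebra ℤ G)
        = (((q : (MonoidAlgebra ℤ G)ˣ)) : MonoidAlgebra ℤ G) *
          (((p : (MonoidAlgebra ℤ G)ˣ)) : MonoidAlgebra ℤ G) := by
      have hT : ∀ x : MonoidAlgebra ℤ G,
          grpTilde ℤ h * ((1 - MonoidAlgebra.of ℤ G h) * x) = 0 := fun x => by
        rw [← mul_assoc, Stmt8Aux.tilde_mul_sub, zero_mul]
      rw [hpv, hqv]
      simp only [mul_add, add_mul, mul_one, one_mul, mul_assoc, hT, mul_zero, add_zero]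
      abel
    exact Subtype.ext (Units.ext (by
      rw [MulMemClass.coe_mul, MulMemClass.coe_mul, Units.val_mul, Units.val_mul, hvals]))
  have hD1 : derivedSeries ↥Γ 1 ≤ φ.ker := by
    rw [derivedSeries_one, commutator_def, Subgroup.commutator_le]
    intro p _ q _
    rw [MonoidHom.mem_ker, map_commutatorElement]
    refine commutatorElement_eq_one_iff_commute.mpr ?_
    obtain ⟨m, hm⟩ := Subgroup.mem_zpowers_iff.mp (hφmem p)
    obtain ⟨n, hn⟩ := Subgroup.mem_zpowers_iff.mp (hφmem q)
    rw [← hm, ← hn]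
    exact Commute.zpow_zpow_self h m n
  constructor
  · refine ⟨φ.ker, inferInstance, ?_, ?_⟩
    · refine ⟨⟨?_⟩⟩
      rintro ⟨p, hp⟩ ⟨q, hq⟩
      exact Subtype.ext (hker_comm p q hp hq)
    · exact Subgroup.finiteIndex_ker φ
  · show derivedSeries ↥Γ 2 = ⊥
    have h2 : derivedSeries ↥Γ 2 = ⁅derivedSeries ↥Γ 1, derivedSeries ↥Γ 1⁆ :=
      derivedSeries_succ ↥Γ 1
    rw [h2, eq_bot_iff, Subgroup.commutator_le]
    intro p hp q hq
    rw [Subgroup.mem_bot]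
    exact commutatorElement_eq_one_iff_commute.mpr
      (hker_comm p q (hD1 hp) (hD1 hq))
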